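/- Let u be the period-doubling sequence, the fixed point beginning with 0 of the morphism 0 → 01, 1 → 00. Then pal_u(k) = 0 for every even k ≥ 4, and pal_u(k) = pal_u(2k−1) = pal_u(2k+1) for every odd k ≥ 5. Moreover pal_u(1) = 2, pal_u(2) = 1, pal_u(3) = 3, pal_u(4) = 0, pal_u(5) = 4, pal_u(6) = 0, pal_u(7) = 3; consequently pal_u takes only the values 0, 1, 2, 3, 4, and limsup_{k→∞} pal_u(k) = 4. -/
import Mathlib

namespace PalPaper

variable {α : Type*}

/-- The finite word `u i, u (i+1), …, u (i+k-1)` read off the infinite sequence `u`. -/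
def factorAt (u : ℕ → α) (i k : ℕ) : List α :=
  (List.range k).map fun j => u (i + j)

/-- `w` occurs as a contiguous block (factor) in the infinite sequence `u`. -/
def IsFactor (u : ℕ → α) (w : List α) : Prop :=
  ∃ i, w = factorAt u i w.length

/-- A palindrome is a word equal to its reversal. -/
def IsPalindrome (w : List α) : Prop := w.reverse = w

/-- Number of distinct factors of length `k` of `u`. -/
noncomputable def facComplexity (u : ℕ → α) (k : ℕ) : ℕ :=
  Set.ncard {w : List α | w.length = k ∧ IsFactor u w}

/-- Number of distinct palindromic factors of length `k` of `u`. -/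
noncomputable def palComplexity (u : ℕ → α) (k : ℕ) : ℕ :=
  Set.ncard {w : List α | w.length = k ∧ IsFactor u w ∧ IsPalindrome w}

/-- `p ≥ 1` is a period of the finite word `w`. -/
def IsPeriodOf (p : ℕ) (w : List α) : Prop :=
  1 ≤ p ∧ ∀ i (h : i + p < w.length), w[i]'(by omega) = w[i + p]'h

/-- The minimal period of a finite word. -/
noncomputable def minPeriod (w : List α) : ℕ := sInf {p | IsPeriodOf p w}

/-- The prefix of length `m` of the infinite sequence `u`, as a finite word. -/
def seqPrefix (u : ℕ → α) (m : ℕ) : List α := (List.range m).map u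

/-- The word `σ(u 0) σ(u 1) ⋯ σ(u (n-1))`. -/
def substPrefix (σ : α → List α) (u : ℕ → α) (n : ℕ) : List α :=
  (List.range n).flatMap fun i => σ (u i)

/-- `v = σ(u)`: every word `σ(u 0) ⋯ σ(u (n-1))` is the corresponding prefix of `v`. -/
def IsMorphicImage (σ : α → List α) (u v : ℕ → α) : Prop :=
  ∀ n, substPrefix σ u n = seqPrefix v (substPrefix σ u n).length

/-- `u` is a fixed point of the morphism `σ`, i.e. `σ(u) = u`. -/
def IsFixedPointOf (σ : α → List α) (u : ℕ → α) : Prop := IsMorphicImage σ u u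

/-- The `k`-th iterate of a morphism, applied to a letter. -/
def morphIter (σ : α → List α) : ℕ → α → List α
  | 0, a => [a]
  | k + 1, a => (σ a).flatMap (morphIter σ k)

/-- A morphism is primitive if some iterate maps every letter to a word
containing every letter. -/
def IsPrimitive (σ : α → List α) : Prop :=
  ∃ k, 1 ≤ k ∧ ∀ a b : α, b ∈ morphIter σ k a

/-! ### Auxiliary machinery -/

@[simp] lemma factorAt_length (u : ℕ → α) (i k : ℕ) : (factorAt u i k).length = k := by
  simp [factorAt]

lemma factorAt_getElem (u : ℕ → α) (i k j : ℕ) (h : j < k) :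
    (factorAt u i k)[j]'(by simp [h]) = u (i + j) := by
  simp [factorAt]

lemma isPalindrome_iff (w : List α) :
    IsPalindrome w ↔ ∀ j (h : j < w.length), w[j] = w[w.length - 1 - j]'(by omega) := by
  constructor
  · intro h j hj
    have h2 : j < w.reverse.length := by simpa using hj
    have h3 := (List.getElem_of_eq h h2).symm
    rwa [List.getElem_reverse] at h3
  · intro h
    apply List.ext_getElem (by simp)
    intro n h1 h2
    rw [List.getElem_reverse]
    exact (h n h2).symm

lemma factorAt_palindrome_iff (u : ℕ → α) (i k : ℕ) :
    IsPalindrome (factorAt u i k) ↔ ∀ j, j < k → u (i + j) = u (i + (k - 1 - j)) := by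
  rw [isPalindrome_iff]
  simp only [factorAt_length]
  constructor
  · intro h j hj
    have h1 := h j hj
    rwa [factorAt_getElem u i k j hj, factorAt_getElem u i k _ (by omega)] at h1
  · intro h j hj
    rw [factorAt_getElem u i k j hj, factorAt_getElem u i k _ (by omega)]
    exact h j hj

lemma factorAt_snoc (u : ℕ → α) (i k : ℕ) :
    factorAt u i (k+1) = factorAt u i k ++ [u (i+k)] := by
  simp [factorAt, List.range_succ]

lemma factorAt_cons (u : ℕ → α) (i k : ℕ) :
    factorAt u i (k+1) = u i :: factorAt u (i+1) k := by
  apply List.ext_getElem (by simp)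
  intro n h1 h2
  rcases n with _ | n
  · rw [factorAt_getElem u i (k+1) 0 (by omega)]
    simp
  · rw [factorAt_getElem u i (k+1) (n+1) (by simpa using h2)]
    rw [List.getElem_cons_succ, factorAt_getElem u (i+1) k n (by simpa using h2)]
    congr 1
    omega

section PD

variable (u : ℕ → Fin 2)

lemma fin2 (a : Fin 2) : a = 0 ∨ a = 1 := by omega

variable (hE : ∀ n, u (2*n) = 0) (hO : ∀ n, u (2*n+1) = 1 - u n)

include hE in
lemma no11 : ∀ j, u j = 1 → u (j+1) = 1 → False := by
  intro j h1 h2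
  rcases Nat.even_or_odd j with ⟨m, hm⟩ | ⟨m, hm⟩
  · rw [show j = 2*m by omega, hE m] at h1; exact absurd h1 (by decide)
  · rw [show j+1 = 2*(m+1) by omega, hE (m+1)] at h2; exact absurd h2 (by decide)

include hO in
lemma odd_zero : ∀ m, u (2*m+1) = 0 → u m = 1 := by
  intro m h; rw [hO m] at h; omega

include hE hO in
lemma nopal4 : ∀ j, u j = u (j+3) → u (j+1) = u (j+2) → False := by
  intro j h03 h12
  rcases Nat.even_or_odd j with ⟨t, ht⟩ | ⟨t, ht⟩
  · have hj : j = 2*t := by omega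
    have e0 : u j = 0 := by rw [hj]; exact hE t
    have e2 : u (j+2) = 0 := by rw [show j+2 = 2*(t+1) by omega]; exact hE (t+1)
    have o1 : u t = 1 := odd_zero u hO t (by rw [← show j+1 = 2*t+1 by omega]; omega)
    have o3 : u (t+1) = 1 := odd_zero u hO (t+1) (by rw [← show j+3 = 2*(t+1)+1 by omega]; omega)
    exact no11 u hE t o1 o3
  · have hj : j = 2*t+1 := by omega
    have e1 : u (j+1) = 0 := by rw [show j+1 = 2*(t+1) by omega]; exact hE (t+1)
    have e3 : u (j+3) = 0 := by rw [show j+3 = 2*(t+2) by omega]; exact hE (t+2)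
    have o0 : u t = 1 := odd_zero u hO t (by rw [← hj]; omega)
    have o2 : u (t+1) = 1 := odd_zero u hO (t+1) (by rw [← show j+2 = 2*(t+1)+1 by omega]; omega)
    exact no11 u hE t o0 o2

include hE hO in
lemma no0000 : ∀ j, u j = 0 → u (j+1) = 0 → u (j+2) = 0 → u (j+3) = 0 → False := by
  intro j h0 h1 h2 h3
  rcases Nat.even_or_odd j with ⟨t, ht⟩ | ⟨t, ht⟩
  · have o1 : u t = 1 := odd_zero u hO t (by rw [← show j+1 = 2*t+1 by omega]; omega)
    have o3 : u (t+1) = 1 := odd_zero u hO (t+1) (by rw [← show j+3 = 2*(t+1)+1 by omega]; omega)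
    exact no11 u hE t o1 o3
  · have o0 : u t = 1 := odd_zero u hO t (by rw [← show j = 2*t+1 by omega]; omega)
    have o2 : u (t+1) = 1 := odd_zero u hO (t+1) (by rw [← show j+2 = 2*(t+1)+1 by omega]; omega)
    exact no11 u hE t o0 o2

include hE hO in
lemma noEvenPalFactorAt (k : ℕ) (h4 : 4 ≤ k) (he : Even k) (i : ℕ) :
    ¬ IsPalindrome (factorAt u i k) := by
  intro hp
  rw [factorAt_palindrome_iff] at hp
  obtain ⟨m, hm⟩ := he
  have hm2 : 2 ≤ m := by omega
  have h1 := hp (m-2) (by omega)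
  have h2 := hp (m-1) (by omega)
  apply nopal4 u hE hO (i+(m-2))
  · rw [show i+(m-2)+3 = i + (k - 1 - (m-2)) by omega]; exact h1
  · rw [show i+(m-2)+1 = i + (m-1) by omega, show i+(m-2)+2 = i + (k - 1 - (m-1)) by omega]
    exact h2

include hE hO in
lemma palComplexity_even (k : ℕ) (h4 : 4 ≤ k) (he : Even k) : palComplexity u k = 0 := by
  have : {w : List (Fin 2) | w.length = k ∧ IsFactor u w ∧ IsPalindrome w} = ∅ := by
    ext w
    simp only [Set.mem_setOf_eq, Set.mem_empty_iff_false, iff_false, not_and]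
    rintro hlen ⟨i, hw⟩ hpal
    rw [hlen] at hw
    rw [hw] at hpal
    exact noEvenPalFactorAt u hE hO k h4 he i hpal
  rw [palComplexity, this, Set.ncard_empty]

end PD


def dbl (p : List (Fin 2)) : List (Fin 2) := p.flatMap fun a => [0, 1-a]

def Fmap (p : List (Fin 2)) : List (Fin 2) := dbl p ++ [0]

def Gmap (p : List (Fin 2)) : List (Fin 2) := (dbl p).tail

lemma dbl_cons (a : Fin 2) (p : List (Fin 2)) : dbl (a :: p) = 0 :: (1-a) :: dbl p := by
  simp [dbl]

lemma dbl_snoc (p : List (Fin 2)) (a : Fin 2) : dbl (p ++ [a]) = dbl p ++ [0, 1-a] := by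
  simp [dbl]

@[simp] lemma dbl_length (p : List (Fin 2)) : (dbl p).length = 2 * p.length := by
  induction p with
  | nil => simp [dbl]
  | cons a p ih => rw [dbl_cons]; simp only [List.length_cons, ih]; omega

lemma dbl_injective : Function.Injective dbl := by
  intro p q h
  induction p generalizing q with
  | nil =>
    rcases q with _ | ⟨b, q⟩
    · rfl
    · exfalso; have := congrArg List.length h; simp [dbl] at this
  | cons a p ih =>
    rcases q with _ | ⟨b, q⟩
    · exfalso; have := congrArg List.length h; simp [dbl] at this
    · rw [dbl_cons, dbl_cons] at h
      simp only [List.cons.injEq] at h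
      obtain ⟨-, h1, h2⟩ := h
      have : a = b := by omega
      rw [this, ih h2]

lemma Fmap_injective : Function.Injective Fmap := by
  intro p q h
  apply dbl_injective
  have := congrArg List.dropLast h
  simpa [Fmap] using this

lemma Gmap_inj_of_ne_nil {p q : List (Fin 2)} (hp : p ≠ []) (hq : q ≠ [])
    (h : Gmap p = Gmap q) : p = q := by
  apply dbl_injective
  rcases p with _ | ⟨a, p⟩; · exact absurd rfl hp
  rcases q with _ | ⟨b, q⟩; · exact absurd rfl hq
  rw [dbl_cons, dbl_cons]
  have h' : Gmap (a :: p) = Gmap (b :: q) := h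
  rw [Gmap, Gmap, dbl_cons, dbl_cons] at h'
  simpa using h'

section PD2

variable (u : ℕ → Fin 2) (hE : ∀ n, u (2*n) = 0) (hO : ∀ n, u (2*n+1) = 1 - u n)

include hE hO in
lemma dbl_factor (i k : ℕ) : dbl (factorAt u i k) = factorAt u (2*i) (2*k) := by
  induction k with
  | zero => simp [factorAt, dbl]
  | succ k ih =>
    rw [factorAt_snoc, dbl_snoc, ih]
    rw [show 2*(k+1) = (2*k+1)+1 by ring, factorAt_snoc, factorAt_snoc]
    rw [List.append_assoc]
    congr 1
    have e1 : u (2*i + 2*k) = 0 := by rw [show 2*i+2*k = 2*(i+k) by ring]; exact hE (i+k)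
    have e2 : u (2*i + (2*k+1)) = 1 - u (i+k) := by
      rw [show 2*i+(2*k+1) = 2*(i+k)+1 by ring]; exact hO (i+k)
    rw [e1, e2]
    rfl

include hE hO in
lemma Fmap_factor (i k : ℕ) : Fmap (factorAt u i k) = factorAt u (2*i) (2*k+1) := by
  rw [Fmap, dbl_factor u hE hO, factorAt_snoc]
  congr 1
  rw [show 2*i+2*k = 2*(i+k) by ring, hE (i+k)]

include hE hO in
lemma Gmap_factor (i k : ℕ) (hk : 1 ≤ k) :
    Gmap (factorAt u i k) = factorAt u (2*i+1) (2*k-1) := by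
  rw [Gmap, dbl_factor u hE hO]
  obtain ⟨k', rfl⟩ : ∃ k', k = k' + 1 := ⟨k-1, by omega⟩
  rw [show 2*(k'+1) = (2*k'+1)+1 by ring, factorAt_cons]
  simp only [List.tail_cons]
  congr 1

include hE hO in
lemma palF_iff (m k : ℕ) :
    IsPalindrome (factorAt u (2*m) (2*k+1)) ↔ IsPalindrome (factorAt u m k) := by
  rw [factorAt_palindrome_iff, factorAt_palindrome_iff]
  constructor
  · intro h j hj
    have ht := h (2*j+1) (by omega)
    rw [show 2*m + (2*j+1) = 2*(m+j)+1 by ring, hO (m+j)] at ht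
    rw [show 2*m + (2*k+1 - 1 - (2*j+1)) = 2*(m + (k-1-j))+1 by omega, hO (m+(k-1-j))] at ht
    omega
  · intro h t ht
    rcases Nat.even_or_odd t with ⟨j, hj⟩ | ⟨j, hj⟩
    · rw [show 2*m + t = 2*(m+j) by omega, hE (m+j),
        show 2*m + (2*k+1-1-t) = 2*(m+(k-j)) by omega, hE (m+(k-j))]
    · have hjk : j < k := by omega
      have := h j hjk
      rw [show 2*m + t = 2*(m+j)+1 by omega, hO (m+j),
        show 2*m + (2*k+1-1-t) = 2*(m+(k-1-j))+1 by omega, hO (m+(k-1-j))]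
      rw [this]

include hE hO in
lemma palG_iff (m k : ℕ) (hk : 1 ≤ k) :
    IsPalindrome (factorAt u (2*m+1) (2*k-1)) ↔ IsPalindrome (factorAt u m k) := by
  rw [factorAt_palindrome_iff, factorAt_palindrome_iff]
  constructor
  · intro h j hj
    have ht := h (2*j) (by omega)
    rw [show 2*m+1 + 2*j = 2*(m+j)+1 by ring, hO (m+j)] at ht
    rw [show 2*m+1 + (2*k-1 - 1 - 2*j) = 2*(m + (k-1-j))+1 by omega, hO (m+(k-1-j))] at ht
    omega
  · intro h t ht
    rcases Nat.even_or_odd t with ⟨j, hj⟩ | ⟨j, hj⟩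
    · have hjk : j < k := by omega
      have := h j hjk
      rw [show 2*m+1 + t = 2*(m+j)+1 by omega, hO (m+j),
        show 2*m+1 + (2*k-1-1-t) = 2*(m+(k-1-j))+1 by omega, hO (m+(k-1-j))]
      rw [this]
    · rw [show 2*m+1 + t = 2*(m+j+1) by omega, hE (m+j+1),
        show 2*m+1 + (2*k-1-1-t) = 2*(m+(k-1-j)) by omega, hE (m+(k-1-j))]

include hE hO in
lemma palComplexity_double_plus (k : ℕ) (hko : Odd k) (hk3 : 3 ≤ k) :
    palComplexity u (2*k+1) = palComplexity u k := by
  have himg : {w : List (Fin 2) | w.length = 2*k+1 ∧ IsFactor u w ∧ IsPalindrome w} =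
      Fmap '' {w : List (Fin 2) | w.length = k ∧ IsFactor u w ∧ IsPalindrome w} := by
    ext w
    simp only [Set.mem_setOf_eq, Set.mem_image]
    constructor
    · rintro ⟨hlen, ⟨i, hw⟩, hpal⟩
      rw [hlen] at hw
      rcases Nat.even_or_odd i with ⟨m, hm⟩ | ⟨m, hm⟩
      · have hi : i = 2*m := by omega
        refine ⟨factorAt u m k, ⟨by simp, ⟨m, by simp⟩, ?_⟩, ?_⟩
        · rw [← palF_iff u hE hO m k, ← hi, ← hw]; exact hpal
        · rw [Fmap_factor u hE hO, ← hi, ← hw]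
      · exfalso
        have hi : i = 2*m+1 := by omega
        rw [hw, hi, factorAt_palindrome_iff] at hpal
        apply noEvenPalFactorAt u hE hO (k+1) (by omega)
          (by rcases hko with ⟨l, hl⟩; exact ⟨l+1, by omega⟩) m
        rw [factorAt_palindrome_iff]
        intro j hj
        have ht := hpal (2*j) (by omega)
        rw [show 2*m+1 + 2*j = 2*(m+j)+1 by ring, hO (m+j)] at ht
        rw [show 2*m+1 + (2*k+1-1-2*j) = 2*(m+(k-j))+1 by omega, hO (m+(k-j))] at ht
        rw [show m + (k+1-1-j) = m + (k-j) by omega]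
        omega
    · rintro ⟨p, ⟨hlen, ⟨i, hp⟩, hpal⟩, rfl⟩
      rw [hlen] at hp
      rw [hp]
      refine ⟨by simp [Fmap], ⟨2*i, ?_⟩, ?_⟩
      · rw [Fmap_factor u hE hO]; simp [Fmap]
      · rw [Fmap_factor u hE hO, palF_iff u hE hO, ← hp]; exact hpal
  rw [palComplexity, palComplexity, himg,
    Set.ncard_image_of_injOn (Function.Injective.injOn Fmap_injective)]

include hE hO in
lemma palComplexity_double_minus (k : ℕ) (hko : Odd k) (hk5 : 5 ≤ k) :
    palComplexity u (2*k-1) = palComplexity u k := by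
  have himg : {w : List (Fin 2) | w.length = 2*k-1 ∧ IsFactor u w ∧ IsPalindrome w} =
      Gmap '' {w : List (Fin 2) | w.length = k ∧ IsFactor u w ∧ IsPalindrome w} := by
    ext w
    simp only [Set.mem_setOf_eq, Set.mem_image]
    constructor
    · rintro ⟨hlen, ⟨i, hw⟩, hpal⟩
      rw [hlen] at hw
      rcases Nat.even_or_odd i with ⟨m, hm⟩ | ⟨m, hm⟩
      · exfalso
        have hi : i = 2*m := by omega
        rw [hw, hi, factorAt_palindrome_iff] at hpal
        apply noEvenPalFactorAt u hE hO (k-1) (by omega)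
          (by rcases hko with ⟨l, hl⟩; exact ⟨l, by omega⟩) m
        rw [factorAt_palindrome_iff]
        intro j hj
        have ht := hpal (2*j+1) (by omega)
        rw [show 2*m + (2*j+1) = 2*(m+j)+1 by ring, hO (m+j)] at ht
        rw [show 2*m + (2*k-1-1-(2*j+1)) = 2*(m+(k-2-j))+1 by omega, hO (m+(k-2-j))] at ht
        rw [show m + (k-1-1-j) = m + (k-2-j) by omega]
        omega
      · have hi : i = 2*m+1 := by omega
        refine ⟨factorAt u m k, ⟨by simp, ⟨m, by simp⟩, ?_⟩, ?_⟩
        · rw [← palG_iff u hE hO m k (by omega), ← hi, ← hw]; exact hpal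
        · rw [Gmap_factor u hE hO m k (by omega), ← hi, ← hw]
    · rintro ⟨p, ⟨hlen, ⟨i, hp⟩, hpal⟩, rfl⟩
      rw [hlen] at hp
      rw [hp]
      refine ⟨?_, ⟨2*i+1, ?_⟩, ?_⟩
      · rw [Gmap_factor u hE hO i k (by omega)]; simp
      · rw [Gmap_factor u hE hO i k (by omega)]; simp
      · rw [Gmap_factor u hE hO i k (by omega), palG_iff u hE hO i k (by omega), ← hp]
        exact hpal
  rw [palComplexity, palComplexity, himg, Set.ncard_image_of_injOn ?_]
  intro p hp q hq h
  exact Gmap_inj_of_ne_nil (List.ne_nil_of_length_pos (by rw [hp.1]; omega))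
    (List.ne_nil_of_length_pos (by rw [hq.1]; omega)) h


end PD2


lemma factorAt_one (u : ℕ → α) (i : ℕ) : factorAt u i 1 = [u i] := by
  simp [factorAt, List.range_succ]

lemma factorAt_two (u : ℕ → α) (i : ℕ) : factorAt u i 2 = [u i, u (i+1)] := by
  simp [factorAt, List.range_succ]

lemma factorAt_three (u : ℕ → α) (i : ℕ) : factorAt u i 3 = [u i, u (i+1), u (i+2)] := by
  simp [factorAt, List.range_succ]

lemma factorAt_five (u : ℕ → α) (i : ℕ) :
    factorAt u i 5 = [u i, u (i+1), u (i+2), u (i+3), u (i+4)] := by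
  simp [factorAt, List.range_succ]

section PD3

variable (u : ℕ → Fin 2) (hE : ∀ n, u (2*n) = 0) (hO : ∀ n, u (2*n+1) = 1 - u n)
  (h0 : u 0 = 0)

include hE hO h0 in
lemma uvals : u 1 = 1 ∧ u 2 = 0 ∧ u 3 = 0 ∧ u 4 = 0 ∧ u 5 = 1 ∧ u 6 = 0 ∧ u 7 = 1 ∧
    u 8 = 0 ∧ u 9 = 1 ∧ u 10 = 0 ∧ u 11 = 0 ∧ u 12 = 0 ∧ u 13 = 1 ∧ u 14 = 0 ∧ u 15 = 0 := by
  have h1 : u 1 = 1 := by have h := hO 0; norm_num at h; omega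
  have h2 : u 2 = 0 := by have h := hE 1; norm_num at h; omega
  have h3 : u 3 = 0 := by have h := hO 1; norm_num at h; omega
  have h4 : u 4 = 0 := by have h := hE 2; norm_num at h; omega
  have h5 : u 5 = 1 := by have h := hO 2; norm_num at h; omega
  have h6 : u 6 = 0 := by have h := hE 3; norm_num at h; omega
  have h7 : u 7 = 1 := by have h := hO 3; norm_num at h; omega
  have h8 : u 8 = 0 := by have h := hE 4; norm_num at h; omega
  have h9 : u 9 = 1 := by have h := hO 4; norm_num at h; omega
  have h10 : u 10 = 0 := by have h := hE 5; norm_num at h; omega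
  have h11 : u 11 = 0 := by have h := hO 5; norm_num at h; omega
  have h12 : u 12 = 0 := by have h := hE 6; norm_num at h; omega
  have h13 : u 13 = 1 := by have h := hO 6; norm_num at h; omega
  have h14 : u 14 = 0 := by have h := hE 7; norm_num at h; omega
  have h15 : u 15 = 0 := by have h := hO 7; norm_num at h; omega
  exact ⟨h1, h2, h3, h4, h5, h6, h7, h8, h9, h10, h11, h12, h13, h14, h15⟩

include hE hO h0 in
lemma palComplexity_one : palComplexity u 1 = 2 := by
  obtain ⟨h1, -⟩ := uvals u hE hO h0
  have hset : {w : List (Fin 2) | w.length = 1 ∧ IsFactor u w ∧ IsPalindrome w} =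
      ↑({[0], [1]} : Finset (List (Fin 2))) := by
    ext w
    simp only [Set.mem_setOf_eq, Finset.coe_insert, Set.mem_insert_iff, Finset.coe_singleton,
      Set.mem_singleton_iff]
    constructor
    · rintro ⟨hlen, ⟨i, hw⟩, hpal⟩
      rw [hlen] at hw
      rw [hw, factorAt_one]
      rcases fin2 (u i) with h | h <;> rw [h] <;> simp
    · rintro (rfl | rfl)
      · exact ⟨rfl, ⟨0, by simp [factorAt_one, h0]⟩, by unfold IsPalindrome; decide⟩
      · exact ⟨rfl, ⟨1, by simp [factorAt_one, h1]⟩, by unfold IsPalindrome; decide⟩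
  rw [palComplexity, hset, Set.ncard_coe_finset]
  decide

include hE hO h0 in
lemma palComplexity_two : palComplexity u 2 = 1 := by
  obtain ⟨h1, h2, h3, -⟩ := uvals u hE hO h0
  have hset : {w : List (Fin 2) | w.length = 2 ∧ IsFactor u w ∧ IsPalindrome w} =
      ↑({[0, 0]} : Finset (List (Fin 2))) := by
    ext w
    simp only [Set.mem_setOf_eq, Finset.coe_singleton, Set.mem_singleton_iff]
    constructor
    · rintro ⟨hlen, ⟨i, hw⟩, hpal⟩
      rw [hlen] at hw
      subst hw
      rw [factorAt_palindrome_iff] at hpal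
      have e := hpal 0 (by omega)
      norm_num at e
      rw [factorAt_two]
      rcases fin2 (u i) with h | h
      · rw [h, show u (i+1) = 0 from by omega]
      · exact (no11 u hE i h (by omega)).elim
    · rintro rfl
      exact ⟨rfl, ⟨2, by simp [factorAt_two, h2, h3]⟩, by unfold IsPalindrome; decide⟩
  rw [palComplexity, hset, Set.ncard_coe_finset]
  decide

include hE hO h0 in
lemma palComplexity_three : palComplexity u 3 = 3 := by
  obtain ⟨h1, h2, h3, h4, h5, h6, h7, -⟩ := uvals u hE hO h0
  have hset : {w : List (Fin 2) | w.length = 3 ∧ IsFactor u w ∧ IsPalindrome w} =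
      ↑({[0, 0, 0], [0, 1, 0], [1, 0, 1]} : Finset (List (Fin 2))) := by
    ext w
    simp only [Set.mem_setOf_eq, Finset.coe_insert, Set.mem_insert_iff, Finset.coe_singleton,
      Set.mem_singleton_iff]
    constructor
    · rintro ⟨hlen, ⟨i, hw⟩, hpal⟩
      rw [hlen] at hw
      subst hw
      rw [factorAt_palindrome_iff] at hpal
      have e := hpal 0 (by omega)
      norm_num at e
      rw [factorAt_three, show u (i+2) = u i from by omega]
      rcases fin2 (u i) with ha | ha <;> rcases fin2 (u (i+1)) with hb | hb <;>
        simp only [ha, hb]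
      · simp
      · simp
      · simp
      · exact (no11 u hE i ha (by omega)).elim
    · rintro (rfl | rfl | rfl)
      · exact ⟨rfl, ⟨2, by simp [factorAt_three, h2, h3, h4]⟩, by unfold IsPalindrome; decide⟩
      · exact ⟨rfl, ⟨0, by simp [factorAt_three, h0, h1, h2]⟩, by unfold IsPalindrome; decide⟩
      · exact ⟨rfl, ⟨5, by simp [factorAt_three, h5, h6, h7]⟩, by unfold IsPalindrome; decide⟩
  rw [palComplexity, hset, Set.ncard_coe_finset]
  decide

include hE hO h0 in
lemma palComplexity_five : palComplexity u 5 = 4 := by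
  obtain ⟨h1, h2, h3, h4, h5, h6, h7, h8, h9, h10, h11, h12, h13, h14, h15⟩ := uvals u hE hO h0
  have hset : {w : List (Fin 2) | w.length = 5 ∧ IsFactor u w ∧ IsPalindrome w} =
      ↑({[1,0,0,0,1], [0,1,0,1,0], [1,0,1,0,1], [0,0,1,0,0]} : Finset (List (Fin 2))) := by
    ext w
    simp only [Set.mem_setOf_eq, Finset.coe_insert, Set.mem_insert_iff, Finset.coe_singleton,
      Set.mem_singleton_iff]
    constructor
    · rintro ⟨hlen, ⟨i, hw⟩, hpal⟩
      rw [hlen] at hw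
      subst hw
      rw [factorAt_palindrome_iff] at hpal
      have e04 := hpal 0 (by omega)
      have e13 := hpal 1 (by omega)
      norm_num at e04 e13
      rw [factorAt_five, show u (i+3) = u (i+1) from by omega, show u (i+4) = u i from by omega]
      rcases fin2 (u i) with ha | ha <;> rcases fin2 (u (i+1)) with hb | hb <;>
        rcases fin2 (u (i+2)) with hc | hc <;> simp only [ha, hb, hc]
      · exact (no0000 u hE hO i ha hb hc (by omega)).elim
      · simp
      · simp
      · exact (no11 u hE (i+1) hb (by rw [show i+1+1 = i+2 by omega]; exact hc)).elim
      · simp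
      · simp
      · exact (no11 u hE i ha hb).elim
      · exact (no11 u hE i ha hb).elim
    · rintro (rfl | rfl | rfl | rfl)
      · exact ⟨rfl, ⟨1, by simp [factorAt_five, h1, h2, h3, h4, h5]⟩, by unfold IsPalindrome; decide⟩
      · exact ⟨rfl, ⟨4, by simp [factorAt_five, h4, h5, h6, h7, h8]⟩, by unfold IsPalindrome; decide⟩
      · exact ⟨rfl, ⟨5, by simp [factorAt_five, h5, h6, h7, h8, h9]⟩, by unfold IsPalindrome; decide⟩
      · exact ⟨rfl, ⟨11, by simp [factorAt_five, h11, h12, h13, h14, h15]⟩, by unfold IsPalindrome; decide⟩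
  rw [palComplexity, hset, Set.ncard_coe_finset]
  decide

include hE hO h0 in
lemma palComplexity_seven : palComplexity u 7 = 3 := by
  have h := palComplexity_double_plus u hE hO 3 ⟨1, by omega⟩ (by omega)
  norm_num at h
  rw [h, palComplexity_three u hE hO h0]

end PD3


section PD4

variable (u : ℕ → Fin 2) (hE : ∀ n, u (2*n) = 0) (hO : ∀ n, u (2*n+1) = 1 - u n)
  (h0 : u 0 = 0)

include hE hO h0 in
lemma palComplexity_le_four : ∀ k, 1 ≤ k → palComplexity u k ≤ 4 := by
  intro k
  induction k using Nat.strong_induction_on with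
  | _ k ih =>
    intro hk1
    rcases Nat.even_or_odd k with he | ho
    · rcases eq_or_ne k 2 with rfl | hne
      · rw [palComplexity_two u hE hO h0]; omega
      · have h4 : 4 ≤ k := by
          rcases he with ⟨m, hm⟩; omega
        rw [palComplexity_even u hE hO k h4 he]; omega
    · obtain ⟨t, ht⟩ := ho
      rcases (by omega : k = 1 ∨ k = 3 ∨ k = 5 ∨ k = 7 ∨ 9 ≤ k) with rfl | rfl | rfl | rfl | h9
      · rw [palComplexity_one u hE hO h0]; omega
      · rw [palComplexity_three u hE hO h0]; omega
      · rw [palComplexity_five u hE hO h0]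
      · rw [palComplexity_seven u hE hO h0]; omega
      · set l := (k-1)/2 with hl
        have hkl : k = 2*l+1 := by omega
        rcases Nat.even_or_odd l with hle | hlo
        · -- l even, so k = 2*(l+1)-1 with l+1 odd, l+1 ≥ 5
          have hl4 : 4 ≤ l := by
            rcases hle with ⟨t, ht⟩; omega
          have heq : palComplexity u (2*(l+1)-1) = palComplexity u (l+1) :=
            palComplexity_double_minus u hE hO (l+1)
              (by rcases hle with ⟨t, ht⟩; exact ⟨t, by omega⟩) (by omega)
          rw [show k = 2*(l+1)-1 by omega, heq]
          exact ih (l+1) (by omega) (by omega)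
        · have heq : palComplexity u (2*l+1) = palComplexity u l :=
            palComplexity_double_plus u hE hO l hlo (by omega)
          rw [hkl, heq]
          exact ih l (by omega) (by omega)

include hE hO h0 in
lemma palComplexity_freq : ∀ n, ∃ k, n ≤ k ∧ Odd k ∧ 5 ≤ k ∧ palComplexity u k = 4 := by
  intro n
  induction n with
  | zero => exact ⟨5, by omega, ⟨2, by omega⟩, by omega, palComplexity_five u hE hO h0⟩
  | succ n ih =>
    obtain ⟨k, hk, ho, h5, h4⟩ := ih
    refine ⟨2*k-1, by omega, ⟨k-1, by omega⟩, by omega, ?_⟩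
    rw [palComplexity_double_minus u hE hO k ho h5, h4]

include hE hO h0 in
lemma palComplexity_limsup :
    Filter.limsup (fun k => palComplexity u k) Filter.atTop = 4 := by
  have hub : ∀ᶠ k in Filter.atTop, palComplexity u k ≤ 4 :=
    Filter.eventually_atTop.2 ⟨1, palComplexity_le_four u hE hO h0⟩
  have hbdd : Filter.IsBoundedUnder (· ≤ ·) Filter.atTop (fun k => palComplexity u k) :=
    ⟨4, hub⟩
  have hlow : Filter.IsBoundedUnder (· ≥ ·) Filter.atTop (fun k => palComplexity u k) :=
    ⟨0, Filter.Eventually.of_forall fun k => Nat.zero_le _⟩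
  have hcob : Filter.IsCoboundedUnder (· ≤ ·) Filter.atTop (fun k => palComplexity u k) :=
    hlow.isCoboundedUnder_le
  apply le_antisymm
  · exact Filter.limsup_le_of_le hcob hub
  · apply Filter.le_limsup_of_frequently_le _ hbdd
    rw [Filter.frequently_atTop]
    intro a
    obtain ⟨k, hk, -, -, h4⟩ := palComplexity_freq u hE hO h0 a
    exact ⟨k, hk, h4.ge⟩

end PD4

section FixExtract

variable (σ : Fin 2 → List (Fin 2)) (hσ0 : σ 0 = [0, 1]) (hσ1 : σ 1 = [0, 0])
  (u : ℕ → Fin 2) (hfix : IsFixedPointOf σ u)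

lemma substPrefix_succ (n : ℕ) :
    substPrefix σ u (n+1) = substPrefix σ u n ++ σ (u n) := by
  simp [substPrefix, List.range_succ]

include hσ0 hσ1 in
lemma len_σ (a : Fin 2) : (σ a).length = 2 := by
  rcases (by omega : a = 0 ∨ a = 1) with h | h <;> simp [h, hσ0, hσ1]

include hσ0 hσ1 in
lemma substPrefix_length (n : ℕ) : (substPrefix σ u n).length = 2*n := by
  induction n with
  | zero => simp [substPrefix]
  | succ n ih => rw [substPrefix_succ, List.length_append, ih, len_σ σ hσ0 hσ1]; ring

@[simp] lemma seqPrefix_length (m : ℕ) : (seqPrefix u m).length = m := by simp [seqPrefix]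

lemma seqPrefix_getElem (m j : ℕ) (h : j < m) :
    (seqPrefix u m)[j]'(by simp [h]) = u j := by simp [seqPrefix]

include hσ0 hσ1 hfix in
lemma pd_rec (n : ℕ) : u (2*n) = 0 ∧ u (2*n+1) = 1 - u n := by
  have h := hfix (n+1)
  rw [substPrefix_succ] at h
  have hlen : (substPrefix σ u n ++ σ (u n)).length = 2*n+2 := by
    rw [List.length_append, substPrefix_length σ hσ0 hσ1, len_σ σ hσ0 hσ1]
  rw [hlen] at h
  have hsl := substPrefix_length σ hσ0 hσ1 u n
  have key : ∀ j (hj : j < (σ (u n)).length), (σ (u n))[j]'hj = u (2*n+j) := by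
    intro j hj
    have hj2 : 2*n+j < (substPrefix σ u n ++ σ (u n)).length := by
      rw [hlen, len_σ σ hσ0 hσ1] at *; omega
    have e1 : (substPrefix σ u n ++ σ (u n))[2*n+j]'hj2 = (σ (u n))[j]'(by omega) := by
      rw [List.getElem_append_right (by omega)]
      congr 1
      omega
    have e2 := List.getElem_of_eq h hj2
    rw [e1] at e2
    rw [seqPrefix_getElem] at e2
    · exact e2
    · rw [len_σ σ hσ0 hσ1] at hj; omega
  rcases (by omega : u n = 0 ∨ u n = 1) with h' | h'
  · have k0 := key 0 (by rw [len_σ σ hσ0 hσ1]; omega)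
    have k1 := key 1 (by rw [len_σ σ hσ0 hσ1]; omega)
    simp only [h', hσ0] at k0 k1
    simp at k0 k1
    exact ⟨k0.symm, by rw [h', ← k1]; decide⟩
  · have k0 := key 0 (by rw [len_σ σ hσ0 hσ1]; omega)
    have k1 := key 1 (by rw [len_σ σ hσ0 hσ1]; omega)
    simp only [h', hσ1] at k0 k1
    simp at k0 k1
    exact ⟨k0.symm, by rw [h', ← k1]; decide⟩

end FixExtract


/-- Damanik's theorem on the palindrome complexity of the period-doubling
sequence, the fixed point beginning with `0` of `0 → 01`, `1 → 00`. -/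
theorem stmt5 (σ : Fin 2 → List (Fin 2)) (hσ0 : σ 0 = [0, 1]) (hσ1 : σ 1 = [0, 0])
    (u : ℕ → Fin 2) (h0 : u 0 = 0) (hfix : IsFixedPointOf σ u) :
    (∀ k, Even k → 4 ≤ k → palComplexity u k = 0) ∧
    (∀ k, Odd k → 5 ≤ k →
      palComplexity u k = palComplexity u (2 * k - 1) ∧
      palComplexity u k = palComplexity u (2 * k + 1)) ∧
    palComplexity u 1 = 2 ∧ palComplexity u 2 = 1 ∧ palComplexity u 3 = 3 ∧
    palComplexity u 4 = 0 ∧ palComplexity u 5 = 4 ∧ palComplexity u 6 = 0 ∧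
    palComplexity u 7 = 3 ∧
    (∀ k, 1 ≤ k → palComplexity u k ≤ 4) ∧
    Filter.limsup (fun k => palComplexity u k) Filter.atTop = 4 := by
  have hE : ∀ n, u (2*n) = 0 := fun n => (pd_rec σ hσ0 hσ1 u hfix n).1
  have hO : ∀ n, u (2*n+1) = 1 - u n := fun n => (pd_rec σ hσ0 hσ1 u hfix n).2
  refine ⟨fun k he h4 => palComplexity_even u hE hO k h4 he,
    fun k ho h5 => ⟨(palComplexity_double_minus u hE hO k ho h5).symm,
      (palComplexity_double_plus u hE hO k ho (by omega)).symm⟩,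
    palComplexity_one u hE hO h0, palComplexity_two u hE hO h0,
    palComplexity_three u hE hO h0,
    palComplexity_even u hE hO 4 le_rfl ⟨2, by omega⟩,
    palComplexity_five u hE hO h0,
    palComplexity_even u hE hO 6 (by omega) ⟨3, by omega⟩,
    palComplexity_seven u hE hO h0,
    palComplexity_le_four u hE hO h0,
    palComplexity_limsup u hE hO h0⟩

end PalPaper
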